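/- arXiv:math/9804072 — 3 statements merged into one kernel-verified Lean document; each statement's English description precedes it below -/
import Mathlib

section
/- Let G be a nilpotent group of class at most two and H a subgroup of G. Let x, y ∈ G, let q > 0 be an integer, and suppose there exist x', y' in the commutator subgroup [G,G] such that x^q·x' ∈ H and y^q·y' ∈ H. Then [x,y]^q lies in dom_G^{𝒩₂}(H). -/
universe u v

/-- The dominion of a subgroup `H` of `G` in the class of groups `P`. -/
def dominion {G : Type v} [Group G] (P : (K : Type u) → [Group K] → Prop)
    (H : Subgroup G) : Set G :=
  {a : G | ∀ (K : Type u) [Group K], P K → ∀ f g : G →* K,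
    (∀ h ∈ H, f h = g h) → f a = g a}

/-- The commutator `[a,b] = a⁻¹b⁻¹ab`. -/
def commElem {G : Type v} [Group G] (a b : G) : G := a⁻¹ * b⁻¹ * a * b

/-- The class `𝒩₂` of nilpotent groups of class at most two. -/
def NilTwo (K : Type u) [Group K] : Prop := (⊤ : Subgroup K).lowerCentralSeries 2 = ⊥

section Aux

variable {K : Type*} [Group K]

lemma commElem_eq_one_of_central {z : K} (hz : ∀ k : K, z * k = k * z) (b : K) :
    commElem z b = 1 := by
  unfold commElem
  have h := hz b⁻¹
  rw [show z⁻¹ * b⁻¹ * z * b = z⁻¹ * (b⁻¹ * z) * b by group, ← h]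
  group

lemma commElem_mul_left (h2 : ∀ a b k : K, commElem a b * k = k * commElem a b)
    (x y b : K) : commElem (x * y) b = commElem x b * commElem y b := by
  have h := h2 x b y⁻¹
  unfold commElem at *
  rw [show x⁻¹ * b⁻¹ * x * b * (y⁻¹ * b⁻¹ * y * b)
        = (x⁻¹ * b⁻¹ * x * b * y⁻¹) * (b⁻¹ * y * b) by group, h]
  group

lemma commElem_eq_one_of_central' {z : K} (hz : ∀ k : K, z * k = k * z) (b : K) :
    commElem b z = 1 := by
  unfold commElem
  rw [show b⁻¹ * z⁻¹ * b * z = b⁻¹ * z⁻¹ * (b * z) by group, ← hz b]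
  group

lemma commElem_mul_right (h2 : ∀ a b k : K, commElem a b * k = k * commElem a b)
    (x y z : K) : commElem x (y * z) = commElem x y * commElem x z := by
  have h := h2 x y z
  unfold commElem at *
  calc x⁻¹ * (y * z)⁻¹ * x * (y * z)
      = (x⁻¹ * z⁻¹ * x * z) * (z⁻¹ * (x⁻¹ * y⁻¹ * x * y) * z) := by group
    _ = (x⁻¹ * z⁻¹ * x * z) * (z⁻¹ * (z * (x⁻¹ * y⁻¹ * x * y))) := by
        rw [show z⁻¹ * (x⁻¹ * y⁻¹ * x * y) * z = z⁻¹ * (x⁻¹ * y⁻¹ * x * y * z) by group, h]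
    _ = (x⁻¹ * z⁻¹ * x * z) * (x⁻¹ * y⁻¹ * x * y) := by group
    _ = (x⁻¹ * y⁻¹ * x * y) * (x⁻¹ * z⁻¹ * x * z) := (h2 x y _).symm

lemma commElem_pow_left (h2 : ∀ a b k : K, commElem a b * k = k * commElem a b)
    (x b : K) (n : ℕ) : commElem (x ^ n) b = commElem x b ^ n := by
  induction n with
  | zero => simp [commElem]
  | succ n ih =>
      rw [pow_succ, commElem_mul_left h2, ih, pow_succ]

lemma commElem_pow_right (h2 : ∀ a b k : K, commElem a b * k = k * commElem a b)
    (x b : K) (n : ℕ) : commElem x (b ^ n) = commElem x b ^ n := by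
  induction n with
  | zero => simp [commElem]
  | succ n ih =>
      rw [pow_succ, commElem_mul_right h2, ih, pow_succ]

end Aux

open scoped commutatorElement

/-- Let `G` be nilpotent of class at most two, `H ≤ G`, `x, y ∈ G`, `q > 0`,
and suppose `x' , y'` in the commutator subgroup of `G` satisfy `x^q x' ∈ H`
and `y^q y' ∈ H`.  Then `[x,y]^q` lies in the `𝒩₂`-dominion of `H` in `G`. -/
theorem comm_pow_mem_dominion {G : Type u} [Group G]
    (hG : (⊤ : Subgroup G).lowerCentralSeries 2 = ⊥) (H : Subgroup G)
    (x y : G) (q : ℕ) (hq : 0 < q) (x' y' : G)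
    (hx' : x' ∈ commutator G) (hy' : y' ∈ commutator G)
    (hx : x ^ q * x' ∈ H) (hy : y ^ q * y' ∈ H) :
    (commElem x y) ^ q ∈ dominion NilTwo H := by
  intro K _ hK f g hfg
  -- commutators in K are central
  have hc : ∀ c ∈ commutator K, ∀ k : K, c * k = k * c := by
    intro c hcmem k
    have : ⁅c, k⁆ ∈ (⊤ : Subgroup K).lowerCentralSeries 2 := by
      rw [show (2 : ℕ) = 1 + 1 from rfl, Subgroup.lowerCentralSeries_succ]
      exact Subgroup.commutator_mem_commutator
        (by rwa [Subgroup.top_lowerCentralSeries_one]) (Subgroup.mem_top k)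
    rw [hK, Subgroup.mem_bot] at this
    exact commutatorElement_eq_one_iff_mul_comm.mp this
  have hcomm_mem : ∀ a b : K, commElem a b ∈ commutator K := by
    intro a b
    have : ⁅a⁻¹, b⁻¹⁆ ∈ commutator K :=
      Subgroup.commutator_mem_commutator (Subgroup.mem_top _) (Subgroup.mem_top _)
    simpa [commElem, commutatorElement_def, mul_assoc] using this
  have h2 : ∀ a b k : K, commElem a b * k = k * commElem a b :=
    fun a b k => hc _ (hcomm_mem a b) k
  -- images of x', y' are central in K
  have hmap : ∀ (φ : G →* K) (z : G), z ∈ commutator G → φ z ∈ commutator K := by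
    intro φ z hz
    have h1 : φ z ∈ (commutator G).map φ := Subgroup.mem_map_of_mem φ hz
    have h3 : (commutator G).map φ ≤ commutator K := by
      rw [commutator_def, Subgroup.map_commutator]
      exact Subgroup.commutator_mono le_top le_top
    exact h3 h1
  have hfx' := hc _ (hmap f x' hx')
  have hgx' := hc _ (hmap g x' hx')
  have hfy' := hc _ (hmap f y' hy')
  have hgy' := hc _ (hmap g y' hy')
  -- key equalities from agreement on H
  have e1 : (f x) ^ q * f x' = (g x) ^ q * g x' := by
    have := hfg _ hx
    simpa [map_mul, map_pow] using this
  have e2 : (f y) ^ q * f y' = (g y) ^ q * g y' := by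
    have := hfg _ hy
    simpa [map_mul, map_pow] using this
  -- the main computation
  have fmapC : ∀ (φ : G →* K) (a b : G), φ (commElem a b) = commElem (φ a) (φ b) := by
    intro φ a b
    simp [commElem, map_mul, map_inv]
  have key : commElem (f x) (f y) ^ q = commElem (g x) (g y) ^ q := by
    calc commElem (f x) (f y) ^ q
        = commElem ((f x) ^ q) (f y) := (commElem_pow_left h2 _ _ q).symm
      _ = commElem ((f x) ^ q * f x') (f y) := by
          rw [commElem_mul_left h2, commElem_eq_one_of_central hfx', mul_one]
      _ = commElem ((g x) ^ q * g x') (f y) := by rw [e1]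
      _ = commElem ((g x) ^ q) (f y) := by
          rw [commElem_mul_left h2, commElem_eq_one_of_central hgx', mul_one]
      _ = commElem (g x) (f y) ^ q := commElem_pow_left h2 _ _ q
      _ = commElem (g x) ((f y) ^ q) := (commElem_pow_right h2 _ _ q).symm
      _ = commElem (g x) ((f y) ^ q * f y') := by
          rw [commElem_mul_right h2, commElem_eq_one_of_central' hfy', mul_one]
      _ = commElem (g x) ((g y) ^ q * g y') := by rw [e2]
      _ = commElem (g x) ((g y) ^ q) := by
          rw [commElem_mul_right h2, commElem_eq_one_of_central' hgy', mul_one]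
      _ = commElem (g x) (g y) ^ q := commElem_pow_right h2 _ _ q
  rw [map_pow, map_pow, fmapC, fmapC, key]
end

section
/- Let ℰ denote the class of 2-Engel groups. Let F be the relatively free nilpotent group of class two of rank two, with free generators x and y, and let n > 1 be an integer. Let H be the subgroup of F generated by xⁿ and yⁿ. Then [x,y]ⁿ lies in dom_F^{ℰ}(H) but not in H; in particular the class of 2-Engel groups has instances of nontrivial dominions. -/
universe u v

/-- The class `ℰ` of 2-Engel groups: groups satisfying `[[x,y],y] = e`. -/
def Engel2 (K : Type u) [Group K] : Prop :=
  ∀ x y : K, commElem (commElem x y) y = 1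

/-- The relatively free nilpotent group of class two of rank two. -/
abbrev FreeNilTwo : Type := FreeGroup (Fin 2) ⧸ (⊤ : Subgroup (FreeGroup (Fin 2))).lowerCentralSeries 2

/-! ### Generalities about `commElem` -/

section CommElem

variable {K : Type*} [Group K]

open scoped commutatorElement in
theorem commElem_eq_commutator (a b : K) : commElem a b = ⁅a⁻¹, b⁻¹⁆ := by
  simp [commElem, commutatorElement_def]

theorem commElem_inv (a b : K) : (commElem b a)⁻¹ = commElem a b := by
  simp [commElem, mul_assoc]

theorem commElem_mul_right_s12 (a u v : K) :
    commElem a (u * v) = commElem a v * v⁻¹ * commElem a u * v := by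
  simp only [commElem]
  group

theorem engel2_commute_right (hK : Engel2 K) (a b : K) : Commute (commElem a b) b := by
  have h := hK a b
  rw [commElem_eq_commutator, commutatorElement_eq_one_iff_commute] at h
  simpa using h.inv_left.inv_right

theorem engel2_commute_left (hK : Engel2 K) (a b : K) : Commute (commElem a b) a := by
  have h := (engel2_commute_right hK b a).inv_left
  rwa [commElem_inv] at h

theorem engel2_commElem_pow_right (hK : Engel2 K) (a b : K) (k : ℕ) :
    commElem a (b ^ k) = commElem a b ^ k := by
  induction k with
  | zero => simp [commElem]
  | succ k ih =>
    have hc : Commute (commElem a b ^ k) b := (engel2_commute_right hK a b).pow_left k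
    have h1 : b⁻¹ * commElem a b ^ k * b = commElem a b ^ k := by
      rw [mul_assoc, hc.eq, inv_mul_cancel_left]
    calc commElem a (b ^ (k + 1))
        = commElem a b * (b⁻¹ * commElem a b ^ k * b) := by
          rw [pow_succ, commElem_mul_right_s12, ih]; group
      _ = commElem a b * commElem a b ^ k := by rw [h1]
      _ = commElem a b ^ (k + 1) := (pow_succ' _ _).symm

theorem engel2_commElem_pow_left (hK : Engel2 K) (a b : K) (k : ℕ) :
    commElem (a ^ k) b = commElem a b ^ k := by
  rw [← commElem_inv, engel2_commElem_pow_right hK, ← inv_pow, commElem_inv]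

/-- The key 2-Engel computation: if `a^n = c^n` and `b^n = d^n` then
`[a,b]^n = [c,d]^n`. -/
theorem engel2_key (hK : Engel2 K) (a b c d : K) (n : ℕ) (ha : a ^ n = c ^ n)
    (hb : b ^ n = d ^ n) : commElem a b ^ n = commElem c d ^ n := by
  calc commElem a b ^ n = commElem a (b ^ n) := (engel2_commElem_pow_right hK a b n).symm
    _ = commElem a (d ^ n) := by rw [hb]
    _ = commElem a d ^ n := engel2_commElem_pow_right hK a d n
    _ = commElem (a ^ n) d := (engel2_commElem_pow_left hK a d n).symm
    _ = commElem (c ^ n) d := by rw [ha]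
    _ = commElem c d ^ n := engel2_commElem_pow_left hK c d n

end CommElem

/-! ### The discrete Heisenberg group -/

/-- The discrete Heisenberg group: `ℤ³` with a twisted multiplication. -/
@[ext]
structure Heis where
  a : ℤ
  b : ℤ
  c : ℤ

namespace Heis

instance : Mul Heis := ⟨fun p q => ⟨p.a + q.a, p.b + q.b, p.c + q.c + p.a * q.b⟩⟩
instance : One Heis := ⟨⟨0, 0, 0⟩⟩
instance : Inv Heis := ⟨fun p => ⟨-p.a, -p.b, -p.c + p.a * p.b⟩⟩

@[simp] theorem mul_a (p q : Heis) : (p * q).a = p.a + q.a := rfl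
@[simp] theorem mul_b (p q : Heis) : (p * q).b = p.b + q.b := rfl
@[simp] theorem mul_c (p q : Heis) : (p * q).c = p.c + q.c + p.a * q.b := rfl
@[simp] theorem one_a : (1 : Heis).a = 0 := rfl
@[simp] theorem one_b : (1 : Heis).b = 0 := rfl
@[simp] theorem one_c : (1 : Heis).c = 0 := rfl
@[simp] theorem inv_a (p : Heis) : p⁻¹.a = -p.a := rfl
@[simp] theorem inv_b (p : Heis) : p⁻¹.b = -p.b := rfl
@[simp] theorem inv_c (p : Heis) : p⁻¹.c = -p.c + p.a * p.b := rfl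

instance : Group Heis where
  mul_assoc p q r := by ext <;> simp <;> ring
  one_mul p := by ext <;> simp
  mul_one p := by ext <;> simp
  inv_mul_cancel p := by ext <;> simp <;> ring

/-- The generator `u`. -/
def u : Heis := ⟨1, 0, 0⟩
/-- The generator `v`. -/
def v : Heis := ⟨0, 1, 0⟩

theorem u_pow (k : ℕ) : u ^ k = ⟨k, 0, 0⟩ := by
  induction k with
  | zero => rfl
  | succ k ih => rw [pow_succ, ih]; ext <;> simp [u] <;> push_cast <;> ring

theorem v_pow (k : ℕ) : v ^ k = ⟨0, k, 0⟩ := by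
  induction k with
  | zero => rfl
  | succ k ih => rw [pow_succ, ih]; ext <;> simp [v] <;> push_cast <;> ring

theorem z_pow (k : ℕ) : (⟨0, 0, 1⟩ : Heis) ^ k = ⟨0, 0, k⟩ := by
  induction k with
  | zero => rfl
  | succ k ih => rw [pow_succ, ih]; ext <;> simp <;> push_cast <;> ring

theorem commElem_uv : commElem u v = ⟨0, 0, 1⟩ := by
  show u⁻¹ * v⁻¹ * u * v = _
  ext <;> simp [u, v]

/-- Elements with trivial first two coordinates are central. -/
theorem central_of (p : Heis) (hpa : p.a = 0) (hpb : p.b = 0) (q : Heis) :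
    p * q = q * p := by
  ext <;> simp [hpa, hpb] <;> ring

theorem lcs_two_eq_bot : (⊤ : Subgroup Heis).lowerCentralSeries 2 = ⊥ := by
  have h1 : (⊤ : Subgroup Heis).lowerCentralSeries 1 ≤
      { carrier := {p : Heis | p.a = 0 ∧ p.b = 0}
        one_mem' := by simp
        mul_mem' := by rintro p q ⟨h1, h2⟩ ⟨h3, h4⟩; exact ⟨by simp [h1, h3], by simp [h2, h4]⟩
        inv_mem' := by rintro p ⟨h1, h2⟩; exact ⟨by simp [h1], by simp [h2]⟩ } := by
    rw [Subgroup.lowerCentralSeries_succ, Subgroup.commutator_def, Subgroup.closure_le]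
    rintro - ⟨g, -, h, -, rfl⟩
    constructor
    · show (g * h * g⁻¹ * h⁻¹).a = 0
      simp
    · show (g * h * g⁻¹ * h⁻¹).b = 0
      simp
  rw [eq_bot_iff]
  rw [show (2 : ℕ) = 1 + 1 from rfl, Subgroup.lowerCentralSeries_succ, Subgroup.commutator_def, Subgroup.closure_le]
  rintro - ⟨g, hg, h, -, rfl⟩
  obtain ⟨hga, hgb⟩ := h1 hg
  have := central_of g hga hgb h
  simp only [Subgroup.mem_bot, SetLike.mem_coe, Set.mem_preimage]
  show g * h * g⁻¹ * h⁻¹ ∈ (⊥ : Subgroup Heis)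
  rw [Subgroup.mem_bot, this]
  group

end Heis

/-- The homomorphism from the free group to the Heisenberg group. -/
def heisHom : FreeGroup (Fin 2) →* Heis :=
  FreeGroup.lift (fun i => if i = 0 then Heis.u else Heis.v)

theorem heisHom_ker : (⊤ : Subgroup (FreeGroup (Fin 2))).lowerCentralSeries 2 ≤ heisHom.ker := by
  intro w hw
  have : heisHom w ∈ (⊤ : Subgroup Heis).lowerCentralSeries 2 :=
    Subgroup.lowerCentralSeries.map heisHom 2 ⟨w, hw, rfl⟩
  rw [Heis.lcs_two_eq_bot, Subgroup.mem_bot] at this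
  exact this

/-- The induced homomorphism on `FreeNilTwo`. -/
def heisQuot : FreeNilTwo →* Heis :=
  QuotientGroup.lift _ heisHom heisHom_ker

theorem heisQuot_x : heisQuot (QuotientGroup.mk (FreeGroup.of 0)) = Heis.u := by
  rw [heisQuot, QuotientGroup.lift_mk, heisHom, FreeGroup.lift_apply_of]; simp

theorem heisQuot_y : heisQuot (QuotientGroup.mk (FreeGroup.of 1)) = Heis.v := by
  rw [heisQuot, QuotientGroup.lift_mk, heisHom, FreeGroup.lift_apply_of]; simp

/-- In the relatively free nilpotent group of class two of rank two, freely
generated by `x` and `y`, for any integer `n > 1` the element `[x,y]ⁿ` lies in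
the dominion of `H = ⟨xⁿ, yⁿ⟩` in the class of 2-Engel groups, but `[x,y]ⁿ ∉ H`;
in particular the class of 2-Engel groups has nontrivial dominions. -/
theorem dominion_nontrivial_engel (n : ℕ) (hn : 1 < n) :
    let x : FreeNilTwo := QuotientGroup.mk (FreeGroup.of 0)
    let y : FreeNilTwo := QuotientGroup.mk (FreeGroup.of 1)
    let H : Subgroup FreeNilTwo := Subgroup.closure {x ^ n, y ^ n}
    (commElem x y) ^ n ∈ dominion Engel2 H ∧ (commElem x y) ^ n ∉ H := by
  intro x y H
  constructor
  · -- dominion part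
    intro K _ hK f g hfg
    have hxH : x ^ n ∈ H := Subgroup.subset_closure (by simp)
    have hyH : y ^ n ∈ H := Subgroup.subset_closure (by simp)
    have hfx : f x ^ n = g x ^ n := by
      have := hfg _ hxH; rwa [map_pow, map_pow] at this
    have hfy : f y ^ n = g y ^ n := by
      have := hfg _ hyH; rwa [map_pow, map_pow] at this
    have hcomm : ∀ (φ : FreeNilTwo →* K), φ (commElem x y ^ n) = commElem (φ x) (φ y) ^ n := by
      intro φ; simp [commElem, map_pow, map_mul, map_inv]
    rw [hcomm f, hcomm g]
    exact engel2_key hK _ _ _ _ n hfx hfy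
  · -- non-membership part
    intro hmem
    -- the divisibility invariant subgroup of `Heis`
    set T : Subgroup Heis :=
      { carrier := {p : Heis | (n : ℤ) ∣ p.a ∧ (n : ℤ) ∣ p.b ∧ (n : ℤ) ^ 2 ∣ p.c}
        one_mem' := by simp
        mul_mem' := by
          rintro p q ⟨h1, h2, h3⟩ ⟨h4, h5, h6⟩
          refine ⟨by simp [dvd_add h1 h4], by simp [dvd_add h2 h5], ?_⟩
          have : (n : ℤ) ^ 2 ∣ p.a * q.b := by
            rw [sq]; exact mul_dvd_mul h1 h5
          simp [dvd_add (dvd_add h3 h6) this]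
        inv_mem' := by
          rintro p ⟨h1, h2, h3⟩
          refine ⟨by simp [h1], by simp [h2], ?_⟩
          have : (n : ℤ) ^ 2 ∣ p.a * p.b := by
            rw [sq]; exact mul_dvd_mul h1 h2
          simp [dvd_add (dvd_neg.mpr h3) this]
      } with hT
    have himg : heisQuot (commElem x y ^ n) ∈ T := by
      have h1 : heisQuot (commElem x y ^ n) ∈ H.map heisQuot :=
        Subgroup.mem_map_of_mem _ hmem
      rw [MonoidHom.map_closure] at h1
      have h2 : Subgroup.closure (heisQuot '' {x ^ n, y ^ n}) ≤ T := by
        rw [Subgroup.closure_le]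
        rintro p ⟨q, hq, rfl⟩
        rcases hq with rfl | rfl
        · rw [map_pow, heisQuot_x, Heis.u_pow]
          exact ⟨dvd_refl _, dvd_zero _, dvd_zero _⟩
        · rw [map_pow, heisQuot_y, Heis.v_pow]
          exact ⟨dvd_zero _, dvd_refl _, dvd_zero _⟩
      exact h2 h1
    have hval : heisQuot (commElem x y ^ n) = ⟨0, 0, (n : ℤ)⟩ := by
      rw [map_pow]
      have : heisQuot (commElem x y) = commElem Heis.u Heis.v := by
        simp only [commElem, map_mul, map_inv]
        rw [show heisQuot x = Heis.u from heisQuot_x, show heisQuot y = Heis.v from heisQuot_y]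
      rw [this, Heis.commElem_uv, Heis.z_pow]
    rw [hval] at himg
    obtain ⟨-, -, hdvd⟩ := himg
    have hnpos : (0 : ℤ) < n := by exact_mod_cast Nat.zero_lt_of_lt hn
    have hle : (n : ℤ) ^ 2 ≤ n := Int.le_of_dvd hnpos hdvd
    have : (1 : ℤ) < n := by exact_mod_cast hn
    nlinarith
end

section
/- Let G be the free metabelian group of rank two, with free generators x and y, and let H be the subgroup of G generated by [y,x], [[y,x],y], and [[y,x],x]. Then dom_G^{𝒜²}(H) equals the commutator subgroup [G,G] of G, and H is properly contained in [G,G]. -/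
universe u v

/-- The class `𝒜²` of metabelian groups. -/
def Metabelian (K : Type u) [Group K] : Prop := derivedSeries K 2 = ⊥

instance : (derivedSeries (FreeGroup (Fin 2)) 2).Normal := derivedSeries_normal _ _

/-- The free metabelian group of rank two: the quotient of the free group on
two generators by its second derived subgroup. -/
abbrev FreeMetab : Type := FreeGroup (Fin 2) ⧸ derivedSeries (FreeGroup (Fin 2)) 2

open scoped commutatorElement

/-! ### Auxiliary material -/

section MetabControl

variable {K : Type*} [Group K]

lemma comm_of_metab (hK : derivedSeries K 2 = ⊥) {b z : K}
    (hb : b ∈ commutator K) (hz : z ∈ commutator K) : b * z = z * b := by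
  have h : ⁅b, z⁆ ∈ derivedSeries K 2 := by
    rw [derivedSeries_succ, derivedSeries_one]
    exact Subgroup.commutator_mem_commutator hb hz
  rwa [hK, Subgroup.mem_bot, commutatorElement_eq_one_iff_mul_comm] at h

lemma conj_mem_commutator {B : K} (hB : B ∈ commutator K) (u : K) :
    u⁻¹ * B * u ∈ commutator K := by
  have := Subgroup.Normal.conj_mem (inferInstance : (commutator K).Normal) B hB u⁻¹
  simpa [mul_assoc] using this

lemma conj_swap (hK : derivedSeries K 2 = ⊥) {B : K} (hB : B ∈ commutator K) (u v : K) :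
    v⁻¹ * (u⁻¹ * B * u) * v = u⁻¹ * (v⁻¹ * B * v) * u := by
  have hz : u⁻¹ * v⁻¹ * u * v ∈ commutator K := by
    have h : u⁻¹ * v⁻¹ * u * v = ⁅u⁻¹, v⁻¹⁆ := by
      rw [commutatorElement_def]; group
    rw [h, commutator_def]
    exact Subgroup.commutator_mem_commutator (Subgroup.mem_top _) (Subgroup.mem_top _)
  have hb : u⁻¹ * (v⁻¹ * B * v) * u ∈ commutator K :=
    conj_mem_commutator (conj_mem_commutator hB v) u
  have key := comm_of_metab hK hb hz
  calc v⁻¹ * (u⁻¹ * B * u) * v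
      = (u⁻¹ * v⁻¹ * u * v)⁻¹ * (u⁻¹ * (v⁻¹ * B * v) * u) * (u⁻¹ * v⁻¹ * u * v) := by
        group
    _ = u⁻¹ * (v⁻¹ * B * v) * u := by rw [mul_assoc, key, inv_mul_cancel_left]

lemma map_commElem {G : Type*} [Group G] (f : G →* K) (a b : G) :
    f (commElem a b) = commElem (f a) (f b) := by
  simp [commElem, map_mul, map_inv]

lemma commElem_mem_commutator {G : Type*} [Group G] (a b : G) :
    commElem a b ∈ commutator G := by
  have h : commElem a b = ⁅a⁻¹, b⁻¹⁆ := by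
    rw [commutatorElement_def]; simp [commElem]
  rw [h, commutator_def]
  exact Subgroup.commutator_mem_commutator (Subgroup.mem_top _) (Subgroup.mem_top _)

end MetabControl

noncomputable section AffGroup

abbrev R2 : Type := AddMonoidAlgebra ℤ (ℤ × ℤ)

@[simp] lemma R2_add_apply (p q : R2) (g : ℤ × ℤ) : (p + q).coeff g = p.coeff g + q.coeff g :=
  Finsupp.add_apply p.coeff q.coeff g
@[simp] lemma R2_neg_apply (p : R2) (g : ℤ × ℤ) : (-p).coeff g = -(p.coeff g) :=
  Finsupp.neg_apply p.coeff g
@[simp] lemma R2_zero_apply (g : ℤ × ℤ) : (0 : R2).coeff g = 0 := rfl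

/-- An affine ("ax+b") group over the Laurent polynomial ring `R2`. -/
@[ext] structure Aff : Type where
  u : R2ˣ
  a : R2

namespace Aff

instance : Group Aff where
  mul p q := ⟨p.u * q.u, p.a * (q.u : R2) + q.a⟩
  one := ⟨1, 0⟩
  inv p := ⟨p.u⁻¹, -(p.a * ((p.u⁻¹ : R2ˣ) : R2))⟩
  mul_assoc p q r := by
    refine Aff.ext (mul_assoc _ _ _) ?_
    show (p.a * (q.u : R2) + q.a) * (r.u : R2) + r.a
        = p.a * ((q.u * r.u : R2ˣ) : R2) + (q.a * (r.u : R2) + r.a)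
    push_cast
    ring
  one_mul p := by
    refine Aff.ext (one_mul _) ?_
    show (0 : R2) * (p.u : R2) + p.a = p.a
    simp
  mul_one p := by
    refine Aff.ext (mul_one _) ?_
    show p.a * ((1 : R2ˣ) : R2) + 0 = p.a
    simp
  inv_mul_cancel p := by
    refine Aff.ext (inv_mul_cancel _) ?_
    show -(p.a * ((p.u⁻¹ : R2ˣ) : R2)) * (p.u : R2) + p.a = (0 : R2)
    rw [neg_mul, mul_assoc, ← Units.val_mul, inv_mul_cancel]
    simp

lemma mul_u (p q : Aff) : (p * q).u = p.u * q.u := rfl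
lemma mul_a (p q : Aff) : (p * q).a = p.a * (q.u : R2) + q.a := rfl
lemma inv_u (p : Aff) : p⁻¹.u = p.u⁻¹ := rfl
lemma inv_a (p : Aff) : p⁻¹.a = -(p.a * ((p.u⁻¹ : R2ˣ) : R2)) := rfl
lemma one_u : (1 : Aff).u = 1 := rfl
lemma one_a : (1 : Aff).a = 0 := rfl

/-- The projection onto the units part. -/
def proj : Aff →* R2ˣ where
  toFun p := p.u
  map_one' := rfl
  map_mul' _ _ := rfl

lemma metabelian : derivedSeries Aff 2 = ⊥ := by
  have h1 : derivedSeries Aff 1 ≤ proj.ker := by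
    rw [derivedSeries_one, commutator_def, Subgroup.commutator_le]
    intro g₁ _ g₂ _
    rw [MonoidHom.mem_ker, map_commutatorElement, commutatorElement_eq_one_iff_mul_comm]
    exact mul_comm _ _
  rw [derivedSeries_succ, eq_bot_iff, Subgroup.commutator_le]
  intro g₁ hg₁ g₂ hg₂
  rw [Subgroup.mem_bot, commutatorElement_eq_one_iff_mul_comm]
  have k₁ : g₁.u = 1 := h1 hg₁
  have k₂ : g₂.u = 1 := h1 hg₂
  refine Aff.ext (by rw [mul_u, mul_u, k₁, k₂]) ?_
  show g₁.a * (g₂.u : R2) + g₂.a = g₂.a * (g₁.u : R2) + g₁.a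
  rw [k₁, k₂]
  push_cast
  ring

/-- Monomial units of `R2`. -/
def mono (g : ℤ × ℤ) : R2ˣ where
  val := AddMonoidAlgebra.single g 1
  inv := AddMonoidAlgebra.single (-g) 1
  val_inv := by
    rw [AddMonoidAlgebra.single_mul_single]
    simp [AddMonoidAlgebra.one_def]
  inv_val := by
    rw [AddMonoidAlgebra.single_mul_single]
    simp [AddMonoidAlgebra.one_def]

@[simp] lemma mono_val (g : ℤ × ℤ) :
    ((mono g : R2ˣ) : R2) = AddMonoidAlgebra.single g 1 := rfl

@[simp] lemma mono_inv (g : ℤ × ℤ) : (mono g)⁻¹ = mono (-g) := Units.ext rfl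

@[simp] lemma mono_mul (g h : ℤ × ℤ) : mono g * mono h = mono (g + h) := by
  refine Units.ext ?_
  show AddMonoidAlgebra.single g 1 * AddMonoidAlgebra.single h 1 = _
  rw [AddMonoidAlgebra.single_mul_single]
  simp

lemma mono_zero : mono 0 = 1 := by
  refine Units.ext ?_
  simp [AddMonoidAlgebra.one_def]

/-- Image of `x`. -/
def gx : Aff := ⟨mono (1, 0), 0⟩
/-- Image of `y`. -/
def gy : Aff := ⟨mono (0, 1), 1⟩

/-- The test subgroup: unipotent elements whose coefficient at `(3,0)` vanishes. -/
def M : Subgroup Aff where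
  carrier := {p | p.u = 1 ∧ p.a.coeff (3, 0) = 0}
  one_mem' := by constructor <;> rfl
  mul_mem' := by
    rintro p q ⟨hpu, hpa⟩ ⟨hqu, hqa⟩
    refine ⟨by rw [mul_u, hpu, hqu, mul_one], ?_⟩
    rw [mul_a, hqu]
    simp [hpa, hqa]
  inv_mem' := by
    rintro p ⟨hpu, hpa⟩
    refine ⟨by rw [inv_u, hpu, inv_one], ?_⟩
    rw [inv_a, hpu]
    simp [hpa]

lemma commElem_u (p q : Aff) : (commElem p q).u = 1 := by
  have h : (commElem p q).u = ⁅p.u⁻¹, q.u⁻¹⁆ := by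
    rw [commutatorElement_def]
    simp [commElem, mul_u, inv_u]
  rw [h, commutatorElement_eq_one_iff_mul_comm]
  exact mul_comm _ _

lemma mem1 : commElem gy gx ∈ M := by
  refine ⟨commElem_u _ _, ?_⟩
  show (commElem gy gx).a.coeff (3, 0) = 0
  simp [commElem, mul_a, mul_u, inv_a, inv_u, gx, gy, mono_mul, mono_inv, mono_val,
    AddMonoidAlgebra.coeff_mul_single_apply, AddMonoidAlgebra.one_def,
    AddMonoidAlgebra.coeff_single, Finsupp.single_apply, Prod.ext_iff]

lemma mem2 : commElem (commElem gy gx) gy ∈ M := by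
  refine ⟨commElem_u _ _, ?_⟩
  show (commElem (commElem gy gx) gy).a.coeff (3, 0) = 0
  simp [commElem, mul_a, mul_u, inv_a, inv_u, gx, gy, mono_mul, mono_inv, mono_val,
    AddMonoidAlgebra.coeff_mul_single_apply, AddMonoidAlgebra.one_def,
    AddMonoidAlgebra.coeff_single, Finsupp.single_apply, Prod.ext_iff]

lemma mem3 : commElem (commElem gy gx) gx ∈ M := by
  refine ⟨commElem_u _ _, ?_⟩
  show (commElem (commElem gy gx) gx).a.coeff (3, 0) = 0
  simp [commElem, mul_a, mul_u, inv_a, inv_u, gx, gy, mono_mul, mono_inv, mono_val,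
    AddMonoidAlgebra.coeff_mul_single_apply, AddMonoidAlgebra.one_def,
    AddMonoidAlgebra.coeff_single, Finsupp.single_apply, Prod.ext_iff]

lemma notmem : (gx * gx)⁻¹ * commElem gy gx * (gx * gx) ∉ M := by
  rintro ⟨-, hA⟩
  rw [show ((gx * gx)⁻¹ * commElem gy gx * (gx * gx)).a.coeff (3, 0) = 1 from ?_] at hA
  · exact one_ne_zero hA
  simp [commElem, mul_a, mul_u, inv_a, inv_u, gx, gy, mono_mul, mono_inv, mono_val,
    AddMonoidAlgebra.coeff_mul_single_apply, AddMonoidAlgebra.one_def,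
    AddMonoidAlgebra.coeff_single, Finsupp.single_apply, Prod.ext_iff]

end Aff

open Aff in
/-- The Magnus-type homomorphism from the free group. -/
def phi0 : FreeGroup (Fin 2) →* Aff :=
  FreeGroup.lift (fun i => if i = 0 then gx else gy)

/-- The induced homomorphism from the free metabelian group. -/
def phi : FreeMetab →* Aff :=
  QuotientGroup.lift _ phi0 (by
    intro w hw
    have : phi0 w ∈ Subgroup.map phi0 (derivedSeries (FreeGroup (Fin 2)) 2) :=
      Subgroup.mem_map_of_mem _ hw
    have h2 := map_derivedSeries_le_derivedSeries phi0 2 this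
    rw [Aff.metabelian, Subgroup.mem_bot] at h2
    exact h2)

lemma phi_x : phi (QuotientGroup.mk (FreeGroup.of 0)) = Aff.gx := by
  show phi0 (FreeGroup.of 0) = Aff.gx
  simp [phi0]

lemma phi_y : phi (QuotientGroup.mk (FreeGroup.of 1)) = Aff.gy := by
  show phi0 (FreeGroup.of 1) = Aff.gy
  simp [phi0]

end AffGroup

/-! ### generation facts -/

lemma freeMetab_gen :
    Subgroup.closure ({QuotientGroup.mk (FreeGroup.of 0),
      QuotientGroup.mk (FreeGroup.of 1)} : Set FreeMetab) = ⊤ := by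
  have hr : Set.range (FreeGroup.of : Fin 2 → FreeGroup (Fin 2)) =
      {FreeGroup.of 0, FreeGroup.of 1} := by
    ext z
    constructor
    · rintro ⟨i, rfl⟩
      fin_cases i
      · exact Set.mem_insert _ _
      · exact Set.mem_insert_iff.mpr (Or.inr rfl)
    · rintro (rfl | rfl)
      · exact ⟨0, rfl⟩
      · exact ⟨1, rfl⟩
  have hsurj : Function.Surjective
      (QuotientGroup.mk' (derivedSeries (FreeGroup (Fin 2)) 2)) :=
    QuotientGroup.mk'_surjective _
  have := Subgroup.map_top_of_surjective _ hsurj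
  rw [← FreeGroup.closure_range_of (Fin 2), MonoidHom.map_closure, hr,
    Set.image_pair] at this
  exact this

universe w

/-- If a group is generated by two commuting elements, it is abelian-ish. -/
lemma commute_of_gen_two {Q : Type w} [Group Q] {p q : Q}
    (hgen : Subgroup.closure ({p, q} : Set Q) = ⊤) (hpq : Commute p q)
    (a b : Q) : Commute a b := by
  have ha : a ∈ Subgroup.closure ({p, q} : Set Q) := by rw [hgen]; trivial
  have hb : b ∈ Subgroup.closure ({p, q} : Set Q) := by rw [hgen]; trivial
  induction ha, hb using Subgroup.closure_induction₂ with
  | mem x y hx hy =>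
    rcases hx with rfl | rfl <;> rcases hy with rfl | rfl
    · exact Commute.refl _
    · exact hpq
    · exact hpq.symm
    · exact Commute.refl _
  | one_left x hx => exact Commute.one_left _
  | one_right x hx => exact Commute.one_right _
  | mul_left x y z hx hy hz h1 h2 => exact h1.mul_left h2
  | mul_right y z x hy hz hx h1 h2 => exact h1.mul_right h2
  | inv_left x y hx hy h => exact h.inv_left
  | inv_right x y hx hy h => exact h.inv_right

lemma derivedSeries_ulift_bot {Q : Type} [Group Q] (h : derivedSeries Q 2 = ⊥) :
    derivedSeries (ULift.{u} Q) 2 = ⊥ := by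
  have e : Q ≃* ULift.{u} Q := MulEquiv.ulift.{0, u}.symm
  rw [← map_derivedSeries_eq (f := e.toMonoidHom) e.surjective 2, h, Subgroup.map_bot]

lemma dominion_subset_commutator {G : Type} [Group G] {H : Subgroup G}
    (hH : H ≤ commutator G) :
    dominion.{u} Metabelian.{u} H ⊆ (commutator G : Set G) := by
  intro a ha
  set π2 := QuotientGroup.mk' (commutator G) with hπ2
  have hQ2 : derivedSeries (G ⧸ commutator G) 2 = ⊥ := by
    have hmap := map_derivedSeries_eq (QuotientGroup.mk'_surjective (commutator G)) 2
    rw [← hmap, eq_bot_iff]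
    have hle : derivedSeries G 2 ≤ commutator G := by
      haveI := derivedSeries_normal G 1
      show ⁅derivedSeries G 1, derivedSeries G 1⁆ ≤ _
      exact (Subgroup.commutator_le_left _ _).trans (derivedSeries_one G).le
    rw [Subgroup.map_le_iff_le_comap]
    intro w hw
    rw [Subgroup.mem_comap, Subgroup.mem_bot, ← MonoidHom.mem_ker, QuotientGroup.ker_mk']
    exact hle hw
  have hmet : Metabelian (ULift.{u} (G ⧸ commutator G)) := derivedSeries_ulift_bot hQ2
  set F : G →* ULift.{u} (G ⧸ commutator G) :=
    (MulEquiv.ulift.{0, u}.symm.toMonoidHom).comp π2 with hF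
  have hagree : ∀ h ∈ H, F h = (1 : G →* ULift.{u} (G ⧸ commutator G)) h := by
    intro h hh
    have h1 : π2 h = 1 := (QuotientGroup.eq_one_iff _).mpr (hH hh)
    show MulEquiv.ulift.{0, u}.symm.toMonoidHom (π2 h) = 1
    rw [h1, map_one]
  have hf := ha (ULift.{u} (G ⧸ commutator G)) hmet F 1 hagree
  have h2 : π2 a = 1 := by
    rw [hF] at hf
    simp only [MonoidHom.comp_apply, MonoidHom.one_apply] at hf
    have h3 := congrArg MulEquiv.ulift.{0, u} hf
    simpa using h3
  exact (QuotientGroup.eq_one_iff _).mp h2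

/-- In the free metabelian group of rank two, freely generated by `x` and `y`,
the `𝒜²`-dominion of the subgroup `H = ⟨[y,x], [[y,x],y], [[y,x],x]⟩` is the
whole commutator subgroup, and `H` is properly contained in the commutator
subgroup. -/
theorem dominion_freeMetab :
    let x : FreeMetab := QuotientGroup.mk (FreeGroup.of 0)
    let y : FreeMetab := QuotientGroup.mk (FreeGroup.of 1)
    let H : Subgroup FreeMetab := Subgroup.closure
      {commElem y x, commElem (commElem y x) y, commElem (commElem y x) x}
    dominion Metabelian H = (commutator FreeMetab : Set FreeMetab) ∧
      H < commutator FreeMetab := by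
  intro x y H
  have hcH : commElem y x ∈ H := Subgroup.subset_closure (Set.mem_insert _ _)
  have hcyH : commElem (commElem y x) y ∈ H :=
    Subgroup.subset_closure (Set.mem_insert_iff.mpr (Or.inr (Set.mem_insert _ _)))
  have hcxH : commElem (commElem y x) x ∈ H :=
    Subgroup.subset_closure (Set.mem_insert_iff.mpr (Or.inr
      (Set.mem_insert_iff.mpr (Or.inr rfl))))
  have hHle : H ≤ commutator FreeMetab := by
    rw [Subgroup.closure_le]
    rintro z (rfl | rfl | rfl) <;> exact commElem_mem_commutator _ _
  have hphix : phi x = Aff.gx := phi_x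
  have hphiy : phi y = Aff.gy := phi_y
  have hHM : H ≤ Aff.M.comap phi := by
    rw [Subgroup.closure_le]
    rintro z (rfl | rfl | rfl)
    · show phi (commElem y x) ∈ Aff.M
      rw [map_commElem, hphix, hphiy]
      exact Aff.mem1
    · show phi (commElem (commElem y x) y) ∈ Aff.M
      rw [map_commElem, map_commElem, hphix, hphiy]
      exact Aff.mem2
    · show phi (commElem (commElem y x) x) ∈ Aff.M
      rw [map_commElem, map_commElem, hphix, hphiy]
      exact Aff.mem3
  have ha0comm : (x * x)⁻¹ * commElem y x * (x * x) ∈ commutator FreeMetab :=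
    conj_mem_commutator (commElem_mem_commutator _ _) _
  have ha0notH : (x * x)⁻¹ * commElem y x * (x * x) ∉ H := by
    intro hmem
    have h1 : phi ((x * x)⁻¹ * commElem y x * (x * x)) ∈ Aff.M := hHM hmem
    rw [map_mul, map_mul, map_inv, map_mul, map_commElem, hphix, hphiy] at h1
    exact Aff.notmem h1
  have hNC : commutator FreeMetab ≤ Subgroup.normalClosure {commElem y x} := by
    rw [commutator_def, Subgroup.commutator_le]
    intro g₁ _ g₂ _
    have hcN : commElem y x ∈ Subgroup.normalClosure ({commElem y x} : Set FreeMetab) :=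
      Subgroup.subset_normalClosure rfl
    set π := QuotientGroup.mk' (Subgroup.normalClosure ({commElem y x} : Set FreeMetab))
      with hπ
    have hπc : π (commElem y x) = 1 := (QuotientGroup.eq_one_iff _).mpr hcN
    rw [map_commElem] at hπc
    have hcom : Commute (π x) (π y) := by
      have h2 : commElem (π y) (π x) = ⁅(π y)⁻¹, (π x)⁻¹⁆ := by
        rw [commutatorElement_def]; simp [commElem]; rfl
      rw [h2] at hπc
      have h3 := commutatorElement_eq_one_iff_commute.mp hπc
      have h4 := h3.inv_inv
      simpa using h4.symm
    have hQgen : Subgroup.closure ({π x, π y} : Set _) = ⊤ := by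
      have hmt := Subgroup.map_top_of_surjective π (QuotientGroup.mk'_surjective _)
      rw [← freeMetab_gen, MonoidHom.map_closure, Set.image_pair] at hmt
      exact hmt
    have hcab : Commute (π g₁) (π g₂) := commute_of_gen_two hQgen hcom _ _
    have hone : π ⁅g₁, g₂⁆ = 1 := by
      rw [map_commutatorElement, commutatorElement_eq_one_iff_commute]
      exact hcab
    exact (QuotientGroup.eq_one_iff _).mp hone
  constructor
  · apply Set.eq_of_subset_of_subset
    · exact dominion_subset_commutator hHle
    · -- commutator ⊆ dominion
      intro a ha
      intro K _ hK f g hfg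
      have hKbot : derivedSeries K 2 = ⊥ := hK
      have hAg : g (commElem y x) = f (commElem y x) := (hfg _ hcH).symm
      have hAcomm : f (commElem y x) ∈ commutator K := by
        rw [map_commElem]
        exact commElem_mem_commutator _ _
      set A := f (commElem y x) with hA
      have e1 : ∀ (B b : K), commElem B b = B⁻¹ * (b⁻¹ * B * b) := by
        intro B b; simp [commElem, mul_assoc]
      set S : Subgroup FreeMetab :=
        { carrier := {w | (f w)⁻¹ * A * f w = (g w)⁻¹ * A * g w}
          one_mem' := by simp
          mul_mem' := by
            intro w₁ w₂ h₁ h₂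
            have h₁' : (f w₁)⁻¹ * A * f w₁ = (g w₁)⁻¹ * A * g w₁ := h₁
            have h₂' : (f w₂)⁻¹ * A * f w₂ = (g w₂)⁻¹ * A * g w₂ := h₂
            show (f (w₁ * w₂))⁻¹ * A * f (w₁ * w₂)
              = (g (w₁ * w₂))⁻¹ * A * g (w₁ * w₂)
            rw [map_mul, map_mul]
            calc (f w₁ * f w₂)⁻¹ * A * (f w₁ * f w₂)
                = (f w₂)⁻¹ * ((f w₁)⁻¹ * A * f w₁) * f w₂ := by group
              _ = (f w₂)⁻¹ * ((g w₁)⁻¹ * A * g w₁) * f w₂ := by rw [h₁']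
              _ = (g w₁)⁻¹ * ((f w₂)⁻¹ * A * f w₂) * g w₁ :=
                  conj_swap hKbot hAcomm _ _
              _ = (g w₁)⁻¹ * ((g w₂)⁻¹ * A * g w₂) * g w₁ := by rw [h₂']
              _ = (g w₂)⁻¹ * ((g w₁)⁻¹ * A * g w₁) * g w₂ :=
                  (conj_swap hKbot hAcomm _ _).symm
              _ = (g w₁ * g w₂)⁻¹ * A * (g w₁ * g w₂) := by group
          inv_mem' := by
            intro w h
            have h' : (f w)⁻¹ * A * f w = (g w)⁻¹ * A * g w := h
            show (f w⁻¹)⁻¹ * A * f w⁻¹ = (g w⁻¹)⁻¹ * A * g w⁻¹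
            simp only [map_inv, inv_inv]
            have step : (f w)⁻¹ * (((g w)⁻¹)⁻¹ * A * (g w)⁻¹) * f w
                = ((g w)⁻¹)⁻¹ * ((f w)⁻¹ * A * f w) * (g w)⁻¹ :=
              conj_swap hKbot hAcomm ((g w)⁻¹) (f w)
            simp only [inv_inv] at step
            rw [h'] at step
            have step2 : g w * ((g w)⁻¹ * A * g w) * (g w)⁻¹ = A := by group
            rw [step2] at step
            calc f w * A * (f w)⁻¹
                = f w * ((f w)⁻¹ * (g w * A * (g w)⁻¹) * f w) * (f w)⁻¹ := by
                  rw [step]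
              _ = g w * A * (g w)⁻¹ := by group } with hS
      have hA2 : commElem (f y) (f x) = A := (map_commElem f y x).symm.trans hA.symm
      have hA2g : commElem (g y) (g x) = A := (map_commElem g y x).symm.trans hAg
      have hyS : y ∈ S := by
        have h5 := hfg _ hcyH
        simp only [map_commElem] at h5
        rw [hA2, hA2g] at h5
        rw [e1, e1] at h5
        exact mul_left_cancel h5
      have hxS : x ∈ S := by
        have h5 := hfg _ hcxH
        simp only [map_commElem] at h5
        rw [hA2, hA2g] at h5
        rw [e1, e1] at h5
        exact mul_left_cancel h5
      have hStop : ∀ w : FreeMetab, w ∈ S := by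
        intro w
        have htop : (⊤ : Subgroup FreeMetab) ≤ S := by
          rw [← freeMetab_gen, Subgroup.closure_le]
          rintro z (rfl | rfl)
          · exact hxS
          · exact hyS
        exact htop trivial
      have hconj : ∀ w : FreeMetab,
          f (w⁻¹ * commElem y x * w) = g (w⁻¹ * commElem y x * w) := by
        intro w
        have hw' : (f w)⁻¹ * A * f w = (g w)⁻¹ * A * g w := hStop w
        simp only [map_mul, map_inv]
        rw [← hA, hAg]
        exact hw'
      have hEloc : Subgroup.normalClosure ({commElem y x} : Set FreeMetab)
          ≤ f.eqLocus g := by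
        show Subgroup.closure (Group.conjugatesOfSet {commElem y x}) ≤ f.eqLocus g
        rw [Subgroup.closure_le]
        intro z hz
        rcases Group.mem_conjugatesOfSet_iff.mp hz with ⟨b, hb, hbz⟩
        rw [Set.mem_singleton_iff] at hb
        subst hb
        rcases isConj_iff.mp hbz with ⟨k, hk⟩
        have h6 := hconj k⁻¹
        rw [inv_inv] at h6
        show f z = g z
        rw [← hk]
        exact h6
      have ha' : a ∈ commutator FreeMetab := ha
      exact hEloc (hNC ha')
  · refine lt_of_le_of_ne hHle fun hEq => ha0notH ?_
    rw [hEq]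
    exact ha0comm
end
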